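/- For a square matrix R ∈ ℝ^{3×3} and constant a > 0, the function P₁(R) = √(‖RᵀR − I‖_F² + a) is twice continuously differentiable, and every entry of its Hessian (as a function of the 9 entries of R) is uniformly bounded by a constant depending only on a. In particular, each entry |[A(R)]_{ab}|/P₁(R) ≤ 1 and |R_{ab}R_{cd}|/P₁(R) ≤ (3 + 3/√a)/2, where A(R) = RᵀR − I. -/

import Mathlib

open Matrix

attribute [local instance] Matrix.normedAddCommGroup Matrix.normedSpace

/-- Squared Frobenius norm of a 3×3 real matrix. -/
noncomputable def frobSq (A : Matrix (Fin 3) (Fin 3) ℝ) : ℝ := ∑ i, ∑ j, (A i j) ^ 2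

/-- The penalty `P₁(R) = √(‖RᵀR − I‖_F² + a)`. -/
noncomputable def P1 (a : ℝ) (R : Matrix (Fin 3) (Fin 3) ℝ) : ℝ :=
  Real.sqrt (frobSq (Rᵀ * R - 1) + a)

namespace Stmt2Aux

abbrev E3 := Matrix (Fin 3) (Fin 3) ℝ

noncomputable def eC (m i : Fin 3) : E3 →L[ℝ] ℝ :=
  LinearMap.toContinuousLinearMap
    { toFun := fun y => y m i
      map_add' := fun _ _ => rfl
      map_smul' := fun _ _ => rfl }

@[simp] lemma eC_apply (m i : Fin 3) (y : E3) : eC m i y = y m i := rfl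

def cf (i j : Fin 3) (y : E3) : ℝ := ∑ m, y m i * y m j

def Af (y : E3) (i j : Fin 3) : ℝ := cf i j y - (if i = j then 1 else 0)

def gf (a : ℝ) (y : E3) : ℝ := (∑ i, ∑ j, Af y i j * Af y i j) + a

lemma Af_eq (y : E3) (i j : Fin 3) : Af y i j = (yᵀ * y - 1) i j := by
  simp [Af, cf, Matrix.mul_apply, Matrix.sub_apply, Matrix.one_apply, Matrix.transpose_apply]

lemma gf_eq (a : ℝ) (y : E3) : gf a y = frobSq (yᵀ * y - 1) + a := by
  simp [gf, frobSq, Af_eq, pow_two, Matrix.sub_apply]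

lemma P1_eq (a : ℝ) (y : E3) : P1 a y = Real.sqrt (gf a y) := by rw [P1, gf_eq]

lemma gf_pos {a : ℝ} (ha : 0 < a) (y : E3) : 0 < gf a y := by
  have : (0:ℝ) ≤ ∑ i, ∑ j, Af y i j * Af y i j :=
    Finset.sum_nonneg fun i _ => Finset.sum_nonneg fun j _ => mul_self_nonneg _
  unfold gf; linarith

noncomputable def Lc (y : E3) (i j : Fin 3) : E3 →L[ℝ] ℝ :=
  ∑ m, (y m i • eC m j + y m j • eC m i)

@[simp] lemma Lc_apply (y : E3) (i j : Fin 3) (w : E3) :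
    Lc y i j w = ∑ m, (y m i * w m j + y m j * w m i) := by
  simp [Lc]

lemma hasFDerivAt_cf (i j : Fin 3) (y : E3) : HasFDerivAt (cf i j) (Lc y i j) y := by
  unfold cf Lc
  exact HasFDerivAt.fun_sum fun m _ => (eC m i).hasFDerivAt.mul (eC m j).hasFDerivAt

lemma hasFDerivAt_Af (i j : Fin 3) (y : E3) :
    HasFDerivAt (fun z => Af z i j) (Lc y i j) y :=
  (hasFDerivAt_cf i j y).sub_const _

noncomputable def Gc (y : E3) : E3 →L[ℝ] ℝ :=
  ∑ i, ∑ j, (Af y i j • Lc y i j + Af y i j • Lc y i j)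

@[simp] lemma Gc_apply (y w : E3) :
    Gc y w = ∑ i, ∑ j, (Af y i j * Lc y i j w + Af y i j * Lc y i j w) := by
  simp [Gc, Finset.sum_apply, ContinuousLinearMap.sum_apply]

lemma hasFDerivAt_gf (a : ℝ) (y : E3) : HasFDerivAt (gf a) (Gc y) y := by
  unfold gf Gc
  exact (HasFDerivAt.fun_sum fun i _ => HasFDerivAt.fun_sum fun j _ =>
    (hasFDerivAt_Af i j y).mul (hasFDerivAt_Af i j y)).add_const a

lemma hasFDerivAt_P1 {a : ℝ} (ha : 0 < a) (y : E3) :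
    HasFDerivAt (P1 a) ((1 / (2 * Real.sqrt (gf a y))) • Gc y) y := by
  have h := (hasFDerivAt_gf a y).sqrt (ne_of_gt (gf_pos ha y))
  have he : P1 a = fun z => Real.sqrt (gf a z) := funext (P1_eq a)
  rw [he]; exact h


noncomputable instance : NormedAddCommGroup (E3 →L[ℝ] ℝ) :=
  ContinuousLinearMap.toNormedAddCommGroup

noncomputable instance : NormedSpace ℝ (E3 →L[ℝ] ℝ) :=
  ContinuousLinearMap.toNormedSpace

noncomputable def Kc (v : E3) (i j : Fin 3) : E3 →L[ℝ] ℝ :=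
  ∑ m, (v m j • eC m i + v m i • eC m j)

@[simp] lemma Kc_apply (v : E3) (i j : Fin 3) (u : E3) :
    Kc v i j u = ∑ m, (v m j * u m i + v m i * u m j) := by
  simp [Kc]

lemma hasFDerivAt_Lcv (i j : Fin 3) (v y : E3) :
    HasFDerivAt (fun z => Lc z i j v) (Kc v i j) y := by
  have he : (fun z : E3 => Lc z i j v) = fun z => Kc v i j z := by
    funext z; simp [mul_comm]
  rw [he]
  exact (Kc v i j).hasFDerivAt

noncomputable def Mc (y v : E3) : E3 →L[ℝ] ℝ :=
  ∑ i, ∑ j, ((Af y i j • Kc v i j + Lc y i j v • Lc y i j) +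
             (Af y i j • Kc v i j + Lc y i j v • Lc y i j))

@[simp] lemma Mc_apply (y v u : E3) :
    Mc y v u = ∑ i, ∑ j, ((Af y i j * Kc v i j u + Lc y i j v * Lc y i j u) +
                          (Af y i j * Kc v i j u + Lc y i j v * Lc y i j u)) := by
  simp [Mc, ContinuousLinearMap.sum_apply]

lemma hasFDerivAt_Gv (v y : E3) : HasFDerivAt (fun z => Gc z v) (Mc y v) y := by
  have he : (fun z : E3 => Gc z v) =
      fun z => ∑ i, ∑ j, (Af z i j * Lc z i j v + Af z i j * Lc z i j v) := by
    funext z; simp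
  rw [he]
  unfold Mc
  exact HasFDerivAt.fun_sum fun i _ => HasFDerivAt.fun_sum fun j _ =>
    ((hasFDerivAt_Af i j y).mul (hasFDerivAt_Lcv i j v y)).add
      ((hasFDerivAt_Af i j y).mul (hasFDerivAt_Lcv i j v y))

lemma fderiv_P1_apply {a : ℝ} (ha : 0 < a) (y v : E3) :
    fderiv ℝ (P1 a) y v = (1 / (2 * Real.sqrt (gf a y))) * Gc y v := by
  rw [(hasFDerivAt_P1 ha y).fderiv]; simp

lemma contDiff_gf (a : ℝ) : ContDiff ℝ 2 (gf a) := by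
  unfold gf
  refine ContDiff.add ?_ contDiff_const
  apply ContDiff.sum; intro i _
  apply ContDiff.sum; intro j _
  have hc : ContDiff ℝ 2 (fun y : E3 => Af y i j) := by
    unfold Af cf
    refine ContDiff.sub ?_ contDiff_const
    apply ContDiff.sum; intro m _
    exact ((eC m i).contDiff).mul ((eC m j).contDiff)
  exact hc.mul hc

lemma contDiff_P1 {a : ℝ} (ha : 0 < a) : ContDiff ℝ 2 (P1 a) := by
  have he : P1 a = fun z => Real.sqrt (gf a z) := funext (P1_eq a)
  rw [he, contDiff_iff_contDiffAt]
  intro y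
  exact (Real.contDiffAt_sqrt (ne_of_gt (gf_pos ha y))).comp y (contDiff_gf a).contDiffAt

lemma key_entry {a : ℝ} (ha : 0 < a) (y u v : E3) :
    iteratedFDeriv ℝ 2 (P1 a) y ![u, v] =
      Mc y v u / (2 * Real.sqrt (gf a y)) -
        Gc y u * Gc y v / (4 * Real.sqrt (gf a y) ^ 3) := by
  have hs : (0:ℝ) < Real.sqrt (gf a y) := Real.sqrt_pos.2 (gf_pos ha y)
  have hdf : DifferentiableAt ℝ (fderiv ℝ (P1 a)) y := by
    have h1 : ContDiff ℝ 1 (fderiv ℝ (P1 a)) :=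
      (contDiff_P1 ha).fderiv_right (le_refl _)
    exact (h1.differentiable one_ne_zero).differentiableAt
  rw [iteratedFDeriv_two_apply]
  have hflip : fderiv ℝ (fderiv ℝ (P1 a)) y (![u, v] 0) (![u, v] 1) =
      fderiv ℝ (fun z => fderiv ℝ (P1 a) z v) y u := by
    simp only [Matrix.cons_val_zero, Matrix.cons_val_one, Matrix.head_cons]
    erw [fderiv_clm_apply hdf (differentiableAt_const v)]
    show _ = fderiv ℝ (P1 a) y (fderiv ℝ (fun _ : E3 => v) y u) + fderiv ℝ (fderiv ℝ (P1 a)) y u v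
    simp
  erw [hflip]
  -- the inner function
  have he : (fun z => fderiv ℝ (P1 a) z v) =
      fun z => (1 / (2 * Real.sqrt (gf a z))) * Gc z v := funext fun z => fderiv_P1_apply ha z v
  rw [he]
  -- derivative of the reciprocal factor
  have h2s : HasFDerivAt (fun z => 2 * Real.sqrt (gf a z))
      ((2:ℝ) • ((1 / (2 * Real.sqrt (gf a y))) • Gc y)) y :=
    (((hasFDerivAt_gf a y).sqrt (ne_of_gt (gf_pos ha y)))).const_mul 2
  have h2ne : (2 * Real.sqrt (gf a y)) ≠ 0 := by positivity
  have hinv := (hasDerivAt_inv h2ne).comp_hasFDerivAt y h2s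
  have hinv' : HasFDerivAt (fun z => 1 / (2 * Real.sqrt (gf a z)))
      ((-((2 * Real.sqrt (gf a y)) ^ 2)⁻¹) • ((2:ℝ) • ((1 / (2 * Real.sqrt (gf a y))) • Gc y))) y := by
    have hfe : (fun z => 1 / (2 * Real.sqrt (gf a z))) =
        (fun t : ℝ => t⁻¹) ∘ (fun z => 2 * Real.sqrt (gf a z)) := by
      funext z; simp [Function.comp, one_div]
    rw [hfe]; exact hinv
  have hprod := hinv'.mul (hasFDerivAt_Gv v y)
  erw [hprod.fderiv]
  show (1 / (2 * Real.sqrt (gf a y))) * Mc y v u + Gc y v * (-((2 * Real.sqrt (gf a y)) ^ 2)⁻¹ * (2 * ((1 / (2 * Real.sqrt (gf a y))) * Gc y u))) = _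
  have hgy : Real.sqrt (gf a y) * Real.sqrt (gf a y) = gf a y :=
    Real.mul_self_sqrt (le_of_lt (gf_pos ha y))
  field_simp
  ring


lemma sum3_abs_le {f : Fin 3 → ℝ} {c : ℝ} (h : ∀ m, |f m| ≤ c) : |∑ m, f m| ≤ 3 * c := by
  calc |∑ m, f m| ≤ ∑ m, |f m| := Finset.abs_sum_le_sum_abs _ _
    _ ≤ ∑ _m : Fin 3, c := Finset.sum_le_sum fun m _ => h m
    _ = 3 * c := by
        rw [Finset.sum_const, Finset.card_univ, Fintype.card_fin, nsmul_eq_mul]; norm_num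

lemma abs_sub_le_abs_add_abs (x y : ℝ) : |x - y| ≤ |x| + |y| := by
  rw [sub_eq_add_neg]
  exact (abs_add_le _ _).trans (by rw [abs_neg])

end Stmt2Aux

open Stmt2Aux in
/-- `P₁` is C² with Hessian entries uniformly bounded by a constant depending only
on `a`; in particular `|[A(R)]_{ab}|/P₁ ≤ 1` and `|R_{ab}R_{cd}|/P₁ ≤ (3 + 3/√a)/2`. -/
theorem stmt2 (a : ℝ) (ha : 0 < a) :
    ContDiff ℝ 2 (P1 a) ∧
    (∃ C : ℝ, ∀ (R : Matrix (Fin 3) (Fin 3) ℝ) (i j k l : Fin 3),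
      |(iteratedFDeriv ℝ 2 (P1 a) R)
        ![Matrix.single i j (1 : ℝ), Matrix.single k l (1 : ℝ)]| ≤ C) ∧
    (∀ (R : Matrix (Fin 3) (Fin 3) ℝ) (i j : Fin 3),
      |(Rᵀ * R - 1) i j| / P1 a R ≤ 1) ∧
    (∀ (R : Matrix (Fin 3) (Fin 3) ℝ) (i j k l : Fin 3),
      |R i j * R k l| / P1 a R ≤ (3 + 3 / Real.sqrt a) / 2) := by
  have hsa : 0 < Real.sqrt a := Real.sqrt_pos.2 ha
  have hs0 : ∀ R : E3, 0 < Real.sqrt (gf a R) := fun R => Real.sqrt_pos.2 (gf_pos ha R)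
  have hsge : ∀ R : E3, Real.sqrt a ≤ Real.sqrt (gf a R) := by
    intro R
    apply Real.sqrt_le_sqrt
    have : (0:ℝ) ≤ ∑ i, ∑ j, Af R i j * Af R i j :=
      Finset.sum_nonneg fun i _ => Finset.sum_nonneg fun j _ => mul_self_nonneg _
    unfold gf; linarith
  have hgA : ∀ (R : E3) (p q : Fin 3), Af R p q * Af R p q ≤ gf a R := by
    intro R p q
    have h1 : Af R p q * Af R p q ≤ ∑ j, Af R p j * Af R p j :=
      Finset.single_le_sum (f := fun j => Af R p j * Af R p j)
        (fun j _ => mul_self_nonneg _) (Finset.mem_univ q)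
    have h2 : (∑ j, Af R p j * Af R p j) ≤ ∑ i, ∑ j, Af R i j * Af R i j :=
      Finset.single_le_sum (f := fun i => ∑ j, Af R i j * Af R i j)
        (fun i _ => Finset.sum_nonneg fun j _ => mul_self_nonneg _) (Finset.mem_univ p)
    unfold gf; linarith
  have hA : ∀ (R : E3) (p q : Fin 3), |Af R p q| ≤ Real.sqrt (gf a R) := by
    intro R p q
    rw [← Real.sqrt_mul_self_eq_abs]
    exact Real.sqrt_le_sqrt (hgA R p q)
  have hRsq : ∀ (R : E3) (p q : Fin 3), R p q * R p q ≤ Real.sqrt (gf a R) + 1 := by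
    intro R p q
    have h1 : R p q * R p q ≤ ∑ m, R m q * R m q :=
      Finset.single_le_sum (f := fun m => R m q * R m q)
        (fun m _ => mul_self_nonneg _) (Finset.mem_univ p)
    have h2 : (∑ m, R m q * R m q) = Af R q q + 1 := by simp [Af, cf]
    have h3 := (neg_abs_le (Af R q q)).trans (le_abs_self (Af R q q))
    have h4 := hA R q q
    have h5 := neg_abs_le (Af R q q)
    have h6 := le_abs_self (Af R q q)
    linarith
  have hRabs : ∀ (R : E3) (p q : Fin 3),
      |R p q| ≤ Real.sqrt (Real.sqrt (gf a R) + 1) := by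
    intro R p q
    rw [← Real.sqrt_mul_self_eq_abs]
    exact Real.sqrt_le_sqrt (hRsq R p q)
  refine ⟨contDiff_P1 ha, ?_, ?_, ?_⟩
  · -- Hessian bound
    refine ⟨3294 + 3240 / Real.sqrt a, ?_⟩
    intro R i j k l
    set s := Real.sqrt (gf a R) with hsdef
    have hs' : 0 < s := hs0 R
    set B := Real.sqrt (s + 1) with hBdef
    have hB0 : (0:ℝ) ≤ B := Real.sqrt_nonneg _
    have hBB : B * B = s + 1 := Real.mul_self_sqrt (by positivity)
    set u := Matrix.single i j (1:ℝ) with hudef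
    set v := Matrix.single k l (1:ℝ) with hvdef
    have hent : ∀ (w : E3), (w = u ∨ w = v) → ∀ p q, |w p q| ≤ 1 := by
      rintro w (rfl | rfl) p q <;>
      · show |(if _ ∧ _ then (1:ℝ) else 0)| ≤ 1
        split_ifs <;> norm_num
    have hu1 : ∀ p q, |u p q| ≤ 1 := hent u (Or.inl rfl)
    have hv1 : ∀ p q, |v p q| ≤ 1 := hent v (Or.inr rfl)
    have hLc : ∀ (p q : Fin 3) (w : E3), (∀ m n, |w m n| ≤ 1) → |Lc R p q w| ≤ 3 * (2 * B) := by
      intro p q w hw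
      rw [Lc_apply]
      apply sum3_abs_le
      intro m
      have h1 : |R m p * w m q| ≤ B * 1 := by
        rw [abs_mul]; exact mul_le_mul (hRabs R m p) (hw m q) (abs_nonneg _) hB0
      have h2 : |R m q * w m p| ≤ B * 1 := by
        rw [abs_mul]; exact mul_le_mul (hRabs R m q) (hw m p) (abs_nonneg _) hB0
      calc |R m p * w m q + R m q * w m p| ≤ |R m p * w m q| + |R m q * w m p| := abs_add_le _ _
        _ ≤ 2 * B := by linarith
    have hKc : ∀ (p q : Fin 3), |Kc v p q u| ≤ 3 * 2 := by
      intro p q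
      rw [Kc_apply]
      apply sum3_abs_le
      intro m
      have h1 : |v m q * u m p| ≤ 1 * 1 := by
        rw [abs_mul]; exact mul_le_mul (hv1 m q) (hu1 m p) (abs_nonneg _) zero_le_one
      have h2 : |v m p * u m q| ≤ 1 * 1 := by
        rw [abs_mul]; exact mul_le_mul (hv1 m p) (hu1 m q) (abs_nonneg _) zero_le_one
      calc |v m q * u m p + v m p * u m q| ≤ |v m q * u m p| + |v m p * u m q| := abs_add_le _ _
        _ ≤ 2 := by linarith
    have hGc : ∀ (w : E3), (∀ m n, |w m n| ≤ 1) → |Gc R w| ≤ 108 * (s * B) := by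
      intro w hw
      have h9 : |Gc R w| ≤ 3 * (3 * (2 * (s * (3 * (2 * B))))) := by
        rw [Gc_apply]
        apply sum3_abs_le; intro p
        apply sum3_abs_le; intro q
        have h1 : |Af R p q * Lc R p q w| ≤ s * (3 * (2 * B)) := by
          rw [abs_mul]
          exact mul_le_mul (hA R p q) (hLc p q w hw) (abs_nonneg _) hs'.le
        calc |Af R p q * Lc R p q w + Af R p q * Lc R p q w|
            ≤ |Af R p q * Lc R p q w| + |Af R p q * Lc R p q w| := abs_add_le _ _
          _ ≤ 2 * (s * (3 * (2 * B))) := by linarith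
      have hsB : s * B = s * B := rfl
      nlinarith [h9]
    have hMc : |Mc R v u| ≤ 756 * s + 648 := by
      have h9 : |Mc R v u| ≤ 3 * (3 * (2 * (6 * s + 36 * (s + 1)))) := by
        rw [Mc_apply]
        apply sum3_abs_le; intro p
        apply sum3_abs_le; intro q
        have h1 : |Af R p q * Kc v p q u| ≤ 6 * s := by
          rw [abs_mul]
          have := mul_le_mul (hA R p q) (hKc p q) (abs_nonneg _) hs'.le
          linarith [this]
        have h2 : |Lc R p q v * Lc R p q u| ≤ 36 * (s + 1) := by
          rw [abs_mul]
          have h := mul_le_mul (hLc p q v hv1) (hLc p q u hu1) (abs_nonneg _) (by positivity)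
          nlinarith [hBB]
        have h3 : |Af R p q * Kc v p q u + Lc R p q v * Lc R p q u| ≤ 6 * s + 36 * (s + 1) :=
          (abs_add_le _ _).trans (by linarith)
        calc |Af R p q * Kc v p q u + Lc R p q v * Lc R p q u +
              (Af R p q * Kc v p q u + Lc R p q v * Lc R p q u)|
            ≤ |Af R p q * Kc v p q u + Lc R p q v * Lc R p q u| +
              |Af R p q * Kc v p q u + Lc R p q v * Lc R p q u| := abs_add_le _ _
          _ ≤ 2 * (6 * s + 36 * (s + 1)) := by linarith
      linarith
    have hGG : |Gc R u| * |Gc R v| ≤ 11664 * (s * s * (s + 1)) := by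
      have h := mul_le_mul (hGc u hu1) (hGc v hv1) (abs_nonneg _) (by positivity)
      have h2 : (108 * (s * B)) * (108 * (s * B)) = 11664 * (s * s * (s + 1)) := by
        calc (108 * (s * B)) * (108 * (s * B)) = 11664 * ((s * s) * (B * B)) := by ring
          _ = 11664 * (s * s * (s + 1)) := by rw [hBB]
      linarith
    rw [key_entry ha R u v]
    have habs : |Mc R v u / (2 * s) - Gc R u * Gc R v / (4 * s ^ 3)| ≤
        |Mc R v u| / (2 * s) + |Gc R u| * |Gc R v| / (4 * s ^ 3) := by
      refine (abs_sub_le_abs_add_abs _ _).trans ?_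
      rw [abs_div, abs_div, abs_of_pos (by positivity : (0:ℝ) < 2 * s),
        abs_of_pos (by positivity : (0:ℝ) < 4 * s ^ 3), abs_mul]
    calc |Mc R v u / (2 * s) - Gc R u * Gc R v / (4 * s ^ 3)|
        ≤ |Mc R v u| / (2 * s) + |Gc R u| * |Gc R v| / (4 * s ^ 3) := habs
      _ ≤ (756 * s + 648) / (2 * s) + (11664 * (s * s * (s + 1))) / (4 * s ^ 3) := by
          gcongr
      _ = 3294 + 3240 / s := by field_simp; ring
      _ ≤ 3294 + 3240 / Real.sqrt a := by gcongr; exact hsge R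
  · -- |A|/P1 ≤ 1
    intro R i j
    rw [P1_eq, ← Af_eq]
    exact (div_le_one (hs0 R)).2 (hA R i j)
  · -- |R_{ij} R_{kl}|/P1 ≤ (3 + 3/√a)/2
    intro R i j k l
    rw [P1_eq]
    set s := Real.sqrt (gf a R) with hsdef
    have hs' : 0 < s := hs0 R
    have h1 : |R i j * R k l| ≤ s + 1 := by
      rw [abs_mul]
      have hb : (0:ℝ) ≤ Real.sqrt (s + 1) := Real.sqrt_nonneg _
      calc |R i j| * |R k l| ≤ Real.sqrt (s + 1) * Real.sqrt (s + 1) :=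
            mul_le_mul (hRabs R i j) (hRabs R k l) (abs_nonneg _) hb
        _ = s + 1 := Real.mul_self_sqrt (by positivity)
    rw [div_le_iff₀ hs']
    have h3 : 3 ≤ 3 / Real.sqrt a * s := by
      rw [div_mul_eq_mul_div, le_div_iff₀ hsa]
      nlinarith [hsge R]
    nlinarith [h1, h3, hs']
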